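/- Let A and A + E be n×n real symmetric matrices, and let Q = [Q₁ Q₂] be an n×n orthogonal matrix with Q₁ ∈ ℝ^{n×r} and Q₂ ∈ ℝ^{n×(n−r)}, such that the column space of Q₁ is an invariant subspace for A (equivalently, Q₂ᵀ·A·Q₁ = 0). Let sep := min{|μ − ν| : μ an eigenvalue of Q₁ᵀAQ₁, ν an eigenvalue of Q₂ᵀAQ₂}. If sep > 0 and ‖E‖_F ≤ sep/5, then there exists a matrix P ∈ ℝ^{(n−r)×r} with ‖P‖_F ≤ 4·‖Q₁ᵀ·E·Q₂‖_F / sep such that the matrix Q̂₁ = (Q₁ + Q₂·P)·(I_r + PᵀP)^{−1/2} satisfies Q̂₁ᵀ·Q̂₁ = I_r and the column space of Q̂₁ is an invariant subspace for A + E (i.e., there exists an r×r matrix R with (A+E)·Q̂₁ = Q̂₁·R). -/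

import Mathlib

open Matrix

/-- Frobenius norm of a real matrix: `(tr(MᵀM))^{1/2}`. -/
noncomputable def frobNorm {m n : ℕ} (M : Matrix (Fin m) (Fin n) ℝ) : ℝ :=
  Real.sqrt ((Mᵀ * M).trace)

/-- Nuclear norm of a real matrix: the trace of the positive semidefinite
square root of `MᵀM` (= sum of singular values). -/
noncomputable def nuclearNorm {m n : ℕ} (M : Matrix (Fin m) (Fin n) ℝ) : ℝ :=
  ((Matrix.posSemidef_conjTranspose_mul_self M).1.eigenvectorUnitary.1 *
    diagonal ((RCLike.ofReal : ℝ → ℝ) ∘ Real.sqrt ∘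
      (Matrix.posSemidef_conjTranspose_mul_self M).1.eigenvalues) *
    (star (Matrix.posSemidef_conjTranspose_mul_self M).1.eigenvectorUnitary :
      Matrix (Fin n) (Fin n) ℝ)).trace

/-- Spectral (ℓ2 → ℓ2 operator) norm of a real matrix: its largest singular value. -/
noncomputable def opNorm {m n : ℕ} (M : Matrix (Fin m) (Fin n) ℝ) : ℝ :=
  ‖LinearMap.toContinuousLinearMap (Matrix.toEuclideanLin M)‖

/-- The ℓ1 norm of the vectorization of a matrix. -/
noncomputable def vecL1 {m n : ℕ} (M : Matrix (Fin m) (Fin n) ℝ) : ℝ :=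
  ∑ i, ∑ j, |M i j|

/-- The ℓ∞ norm of the vectorization of a matrix. -/
noncomputable def vecLinf {m n : ℕ} (M : Matrix (Fin m) (Fin n) ℝ) : ℝ :=
  ⨆ i, ⨆ j, |M i j|

/-- Frobenius (trace) inner product of two matrices. -/
noncomputable def traceInner {m n : ℕ} (M N : Matrix (Fin m) (Fin n) ℝ) : ℝ :=
  (Mᵀ * N).trace

attribute [local instance] Matrix.frobeniusSeminormedAddCommGroup Matrix.frobeniusNormedAddCommGroup Matrix.frobeniusNormedSpace

lemma frobNorm_eq {m n : ℕ} (M : Matrix (Fin m) (Fin n) ℝ) : frobNorm M = ‖M‖ := by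
  rw [frobNorm, Matrix.frobenius_norm_def, Real.sqrt_eq_rpow]
  congr 1
  rw [Matrix.trace, Finset.sum_comm]
  simp [Matrix.mul_apply, Matrix.diag, Real.norm_eq_abs, Real.rpow_two, sq_abs, sq]

-- unitary invariance of frobenius norm (right mult by W with W * Wᵀ = 1)
lemma frob_mul_orth_right {m n : ℕ} (M : Matrix (Fin m) (Fin n) ℝ)
    (W : Matrix (Fin n) (Fin n) ℝ) (hW : W * Wᵀ = 1) : ‖M * W‖ = ‖M‖ := by
  have h1 : Real.sqrt (((M * W)ᵀ * (M * W)).trace) = Real.sqrt ((Mᵀ * M).trace) := by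
    have : Wᵀ * Mᵀ * (M * W) = Wᵀ * (Mᵀ * M * W) := by rw [Matrix.mul_assoc, Matrix.mul_assoc]
    rw [transpose_mul, this, Matrix.trace_mul_comm, mul_assoc, hW, mul_one]
  have e1 := frobNorm_eq (M * W)
  have e2 := frobNorm_eq M
  rw [frobNorm] at e1 e2
  rw [← e1, ← e2]; exact h1

lemma frob_mul_orth_left {m n : ℕ} (M : Matrix (Fin m) (Fin n) ℝ)
    (W : Matrix (Fin m) (Fin m) ℝ) (hW : Wᵀ * W = 1) : ‖W * M‖ = ‖M‖ := by
  rw [← Matrix.frobenius_norm_transpose, transpose_mul, frob_mul_orth_right _ _ (by rwa [transpose_transpose]), Matrix.frobenius_norm_transpose]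

lemma key_sqsum {p q : ℕ} (sep : ℝ) (hsep : 0 < sep) (W D : Matrix (Fin p) (Fin q) ℝ)
    (h : ∀ i j, sep * |W i j| ≤ |D i j|) : sep * ‖W‖ ≤ ‖D‖ := by
  have hW : ∀ (X : Matrix (Fin p) (Fin q) ℝ), ‖X‖ = Real.sqrt (∑ i, ∑ j, |X i j| ^ 2) := by
    intro X
    rw [Matrix.frobenius_norm_def, ← Real.sqrt_eq_rpow]
    simp only [Real.rpow_two, Real.norm_eq_abs]
  rw [hW, hW]
  rw [show sep * Real.sqrt (∑ i, ∑ j, |W i j| ^ 2) = Real.sqrt (sep ^ 2 * ∑ i, ∑ j, |W i j| ^ 2) by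
    rw [Real.sqrt_mul (sq_nonneg _), Real.sqrt_sq hsep.le]]
  apply Real.sqrt_le_sqrt
  rw [Finset.mul_sum]
  refine Finset.sum_le_sum fun i _ => ?_
  rw [Finset.mul_sum]
  refine Finset.sum_le_sum fun j _ => ?_
  rw [← mul_pow]
  exact pow_le_pow_left₀ (by positivity) (h i j) 2

lemma sylvester {p q : ℕ} (L₁ : Matrix (Fin q) (Fin q) ℝ) (L₂ : Matrix (Fin p) (Fin p) ℝ)
    (h₁ : L₁.IsHermitian) (h₂ : L₂.IsHermitian) (sep : ℝ) (hsep : 0 < sep)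
    (hgap : ∀ μ ∈ spectrum ℝ L₁, ∀ ν ∈ spectrum ℝ L₂, sep ≤ |μ - ν|) :
    (∀ Z : Matrix (Fin p) (Fin q) ℝ, sep * ‖Z‖ ≤ ‖L₂ * Z - Z * L₁‖) ∧
    (∀ Y : Matrix (Fin p) (Fin q) ℝ, ∃ Z : Matrix (Fin p) (Fin q) ℝ, L₂ * Z - Z * L₁ = Y) := by
  set U : Matrix (Fin q) (Fin q) ℝ := (h₁.eigenvectorUnitary : Matrix (Fin q) (Fin q) ℝ) with hU
  set V : Matrix (Fin p) (Fin p) ℝ := (h₂.eigenvectorUnitary : Matrix (Fin p) (Fin p) ℝ) with hV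
  set d₁ : Fin q → ℝ := h₁.eigenvalues
  set d₂ : Fin p → ℝ := h₂.eigenvalues
  have hδ : ∀ i j, sep ≤ |d₂ i - d₁ j| := fun i j => by
    rw [abs_sub_comm]
    exact hgap _ (h₁.eigenvalues_mem_spectrum_real j) _ (h₂.eigenvalues_mem_spectrum_real i)
  have hδ0 : ∀ i j, d₂ i - d₁ j ≠ 0 := fun i j h => by
    have := hδ i j; rw [h, abs_zero] at this; linarith
  have hU1 : Uᵀ * U = 1 := Matrix.mem_unitaryGroup_iff'.mp h₁.eigenvectorUnitary.2
  have hU2 : U * Uᵀ = 1 := Matrix.mem_unitaryGroup_iff.mp h₁.eigenvectorUnitary.2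
  have hV1 : Vᵀ * V = 1 := Matrix.mem_unitaryGroup_iff'.mp h₂.eigenvectorUnitary.2
  have hV2 : V * Vᵀ = 1 := Matrix.mem_unitaryGroup_iff.mp h₂.eigenvectorUnitary.2
  have hL₁ : L₁ = U * diagonal d₁ * Uᵀ := by
    have := h₁.spectral_theorem
    simp at this
    rw [this, Matrix.star_eq_conjTranspose, Matrix.conjTranspose_eq_transpose_of_trivial]
  have hL₂ : L₂ = V * diagonal d₂ * Vᵀ := by
    have := h₂.spectral_theorem
    simp at this
    rw [this, Matrix.star_eq_conjTranspose, Matrix.conjTranspose_eq_transpose_of_trivial]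
  have conjL : ∀ X : Matrix (Fin p) (Fin q) ℝ,
      L₂ * (V * X * Uᵀ) = V * (diagonal d₂ * X) * Uᵀ := by
    intro X
    rw [hL₂]
    simp only [Matrix.mul_assoc]
    rw [← Matrix.mul_assoc Vᵀ V, hV1, Matrix.one_mul]
  have conjR : ∀ X : Matrix (Fin p) (Fin q) ℝ,
      (V * X * Uᵀ) * L₁ = V * (X * diagonal d₁) * Uᵀ := by
    intro X
    rw [hL₁]
    simp only [Matrix.mul_assoc]
    rw [← Matrix.mul_assoc Uᵀ U, hU1, Matrix.one_mul]
  have conjId : ∀ Y : Matrix (Fin p) (Fin q) ℝ, V * (Vᵀ * Y * U) * Uᵀ = Y := by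
    intro Y
    simp only [Matrix.mul_assoc]
    rw [hU2, Matrix.mul_one, ← Matrix.mul_assoc V Vᵀ, hV2, Matrix.one_mul]
  constructor
  · intro Z
    set Z' : Matrix (Fin p) (Fin q) ℝ := Vᵀ * Z * U with hZ'
    have hZeq : Z = V * Z' * Uᵀ := by rw [hZ', conjId]
    have hnZ : ‖Z‖ = ‖Z'‖ := by
      rw [hZ', frob_mul_orth_right _ _ hU2,
        frob_mul_orth_left _ _ (by rw [transpose_transpose]; exact hV2)]
    have hYD : L₂ * Z - Z * L₁
        = V * (Matrix.of fun i j => (d₂ i - d₁ j) * Z' i j) * Uᵀ := by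
      rw [hZeq, conjL, conjR, ← Matrix.sub_mul, ← Matrix.mul_sub]
      congr 2
      ext i j
      simp only [Matrix.sub_apply, Matrix.diagonal_mul, Matrix.mul_diagonal, Matrix.of_apply]
      ring
    have hnY : ‖L₂ * Z - Z * L₁‖
        = ‖(Matrix.of fun i j => (d₂ i - d₁ j) * Z' i j : Matrix (Fin p) (Fin q) ℝ)‖ := by
      rw [hYD, frob_mul_orth_right _ _ (by rw [transpose_transpose]; exact hU1),
        frob_mul_orth_left _ _ hV1]
    rw [hnZ, hnY]
    apply key_sqsum sep hsep
    intro i j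
    rw [Matrix.of_apply, abs_mul]
    exact mul_le_mul_of_nonneg_right (hδ i j) (abs_nonneg _)
  · intro Y
    refine ⟨V * (Matrix.of fun i j => ((Vᵀ * Y * U) i j) / (d₂ i - d₁ j)) * Uᵀ, ?_⟩
    rw [conjL, conjR, ← Matrix.sub_mul, ← Matrix.mul_sub]
    rw [show (diagonal d₂ * (Matrix.of fun i j => ((Vᵀ * Y * U) i j) / (d₂ i - d₁ j))
        - (Matrix.of fun i j => ((Vᵀ * Y * U) i j) / (d₂ i - d₁ j)) * diagonal d₁)
        = Vᵀ * Y * U from ?_, conjId]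
    ext i j
    simp only [Matrix.sub_apply, Matrix.diagonal_mul, Matrix.mul_diagonal, Matrix.of_apply]
    field_simp [hδ0 i j]

lemma riccati_solve {p q : ℕ} (L₁ : Matrix (Fin q) (Fin q) ℝ) (L₂ : Matrix (Fin p) (Fin p) ℝ)
    (h₁ : L₁.IsHermitian) (h₂ : L₂.IsHermitian) (sep : ℝ) (hsep : 0 < sep)
    (hgap : ∀ μ ∈ spectrum ℝ L₁, ∀ ν ∈ spectrum ℝ L₂, sep ≤ |μ - ν|)
    (F₁₁ : Matrix (Fin q) (Fin q) ℝ) (F₂₂ : Matrix (Fin p) (Fin p) ℝ)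
    (F₁₂ : Matrix (Fin q) (Fin p) ℝ) (F₂₁ : Matrix (Fin p) (Fin q) ℝ)
    (h11 : ‖F₁₁‖ ≤ sep / 5) (h22 : ‖F₂₂‖ ≤ sep / 5)
    (h21 : ‖F₂₁‖ ≤ sep / 5) (heq : ‖F₁₂‖ = ‖F₂₁‖) :
    ∃ P : Matrix (Fin p) (Fin q) ℝ, ‖P‖ ≤ 4 * ‖F₂₁‖ / sep ∧
      L₂ * P - P * L₁ = -F₂₁ - F₂₂ * P + P * F₁₁ + P * F₁₂ * P := by
  obtain ⟨bound, solve⟩ := sylvester L₁ L₂ h₁ h₂ sep hsep hgap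
  set γ := ‖F₂₁‖ with hγdef
  have hγ : 0 ≤ γ := norm_nonneg _
  set ρ := 4 * γ / sep with hρdef
  have hρ0 : 0 ≤ ρ := by positivity
  have hsρ : sep * ρ = 4 * γ := by
    rw [hρdef]; field_simp
  have hρ45 : ρ ≤ 4 / 5 := by
    rw [hρdef, div_le_iff₀ hsep]; nlinarith
  set arg : Matrix (Fin p) (Fin q) ℝ → Matrix (Fin p) (Fin q) ℝ :=
    fun X => -F₂₁ - F₂₂ * X + X * F₁₁ + X * F₁₂ * X with harg
  have harg_bound : ∀ X, ‖X‖ ≤ ρ → ‖arg X‖ ≤ sep * ρ := by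
    intro X hX
    have hXn : 0 ≤ ‖X‖ := norm_nonneg _
    have m1 : ‖F₂₂ * X‖ ≤ ‖F₂₂‖ * ‖X‖ := Matrix.frobenius_norm_mul _ _
    have m2 : ‖X * F₁₁‖ ≤ ‖X‖ * ‖F₁₁‖ := Matrix.frobenius_norm_mul _ _
    have m3 : ‖X * F₁₂ * X‖ ≤ ‖X‖ * ‖F₁₂‖ * ‖X‖ :=
      le_trans (Matrix.frobenius_norm_mul _ _)
        (mul_le_mul_of_nonneg_right (Matrix.frobenius_norm_mul _ _) hXn)
    have t1 : ‖arg X‖ ≤ ‖F₂₁‖ + ‖F₂₂ * X‖ + ‖X * F₁₁‖ + ‖X * F₁₂ * X‖ := by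
      calc ‖arg X‖ ≤ ‖-F₂₁ - F₂₂ * X + X * F₁₁‖ + ‖X * F₁₂ * X‖ := norm_add_le _ _
        _ ≤ (‖-F₂₁ - F₂₂ * X‖ + ‖X * F₁₁‖) + ‖X * F₁₂ * X‖ := by
            gcongr; exact norm_add_le _ _
        _ ≤ (‖F₂₁‖ + ‖F₂₂ * X‖ + ‖X * F₁₁‖) + ‖X * F₁₂ * X‖ := by
            have h := norm_sub_le (-F₂₁) (F₂₂ * X)
            rw [norm_neg] at h
            gcongr
        _ = _ := by ring
    have ht1 : ‖F₂₂‖ * ‖X‖ ≤ (sep / 5) * ρ := mul_le_mul h22 hX hXn (by positivity)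
    have ht2 : ‖X‖ * ‖F₁₁‖ ≤ ρ * (sep / 5) := mul_le_mul hX h11 (norm_nonneg _) hρ0
    have ht3 : ‖X‖ * ‖F₁₂‖ * ‖X‖ ≤ ρ * γ * ρ := by
      rw [heq]
      exact mul_le_mul (mul_le_mul hX le_rfl hγ hρ0) hX hXn (by positivity)
    have ht4 : γ * ρ ≤ (sep / 5) * ρ := mul_le_mul_of_nonneg_right h21 hρ0
    have ht5 : γ * ρ * ρ ≤ γ * ρ * (4/5) := by
      apply mul_le_mul_of_nonneg_left hρ45 (mul_nonneg hγ hρ0)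
    linarith [t1, m1, m2, m3, ht1, ht2, ht3, ht4, ht5, hsρ, hγ]
  have harg_lip : ∀ X Y, ‖X‖ ≤ ρ → ‖Y‖ ≤ ρ →
      ‖arg X - arg Y‖ ≤ (18 / 25) * sep * ‖X - Y‖ := by
    intro X Y hX hY
    have hdn : 0 ≤ ‖X - Y‖ := norm_nonneg _
    have hXn : 0 ≤ ‖X‖ := norm_nonneg _
    have hYn : 0 ≤ ‖Y‖ := norm_nonneg _
    have hd : arg X - arg Y
        = (-(F₂₂ * (X - Y)) + (X - Y) * F₁₁) + ((X - Y) * F₁₂ * X + Y * F₁₂ * (X - Y)) := by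
      rw [harg]
      simp only [Matrix.sub_mul, Matrix.mul_sub]
      abel
    have m1 : ‖F₂₂ * (X - Y)‖ ≤ ‖F₂₂‖ * ‖X - Y‖ := Matrix.frobenius_norm_mul _ _
    have m2 : ‖(X - Y) * F₁₁‖ ≤ ‖X - Y‖ * ‖F₁₁‖ := Matrix.frobenius_norm_mul _ _
    have m3 : ‖(X - Y) * F₁₂ * X‖ ≤ ‖X - Y‖ * ‖F₁₂‖ * ‖X‖ :=
      le_trans (Matrix.frobenius_norm_mul _ _)
        (mul_le_mul_of_nonneg_right (Matrix.frobenius_norm_mul _ _) hXn)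
    have m4 : ‖Y * F₁₂ * (X - Y)‖ ≤ ‖Y‖ * ‖F₁₂‖ * ‖X - Y‖ :=
      le_trans (Matrix.frobenius_norm_mul _ _)
        (mul_le_mul_of_nonneg_right (Matrix.frobenius_norm_mul _ _) hdn)
    have t1 : ‖arg X - arg Y‖ ≤ ‖F₂₂ * (X - Y)‖ + ‖(X - Y) * F₁₁‖
        + ‖(X - Y) * F₁₂ * X‖ + ‖Y * F₁₂ * (X - Y)‖ := by
      rw [hd]
      calc _ ≤ ‖-(F₂₂ * (X - Y)) + (X - Y) * F₁₁‖ + ‖(X - Y) * F₁₂ * X + Y * F₁₂ * (X - Y)‖ :=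
            norm_add_le _ _
        _ ≤ (‖-(F₂₂ * (X - Y))‖ + ‖(X - Y) * F₁₁‖) + (‖(X - Y) * F₁₂ * X‖ + ‖Y * F₁₂ * (X - Y)‖) := by
            gcongr <;> exact norm_add_le _ _
        _ = _ := by rw [norm_neg]; ring
    have hgr : γ * ρ ≤ 4 * sep / 25 := by
      have e1 : (γ * ρ) * sep = 4 * (γ * γ) := by
        rw [hρdef]; field_simp
      have e2 : γ * γ ≤ (sep / 5) * (sep / 5) := mul_le_mul h21 h21 hγ (by positivity)
      nlinarith
    have ht1 : ‖F₂₂‖ * ‖X - Y‖ ≤ (sep / 5) * ‖X - Y‖ := mul_le_mul_of_nonneg_right h22 hdn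
    have ht2 : ‖X - Y‖ * ‖F₁₁‖ ≤ ‖X - Y‖ * (sep / 5) := mul_le_mul_of_nonneg_left h11 hdn
    have ht3 : ‖X - Y‖ * ‖F₁₂‖ * ‖X‖ ≤ ‖X - Y‖ * (γ * ρ) := by
      rw [heq, mul_assoc]
      exact mul_le_mul_of_nonneg_left (mul_le_mul_of_nonneg_left hX hγ) hdn
    have ht4 : ‖Y‖ * ‖F₁₂‖ * ‖X - Y‖ ≤ (γ * ρ) * ‖X - Y‖ := by
      rw [heq]
      apply mul_le_mul_of_nonneg_right _ hdn
      rw [mul_comm]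
      exact mul_le_mul_of_nonneg_left hY hγ
    have ht5 : ‖X - Y‖ * (γ * ρ) ≤ ‖X - Y‖ * (4 * sep / 25) := mul_le_mul_of_nonneg_left hgr hdn
    have ht6 : (γ * ρ) * ‖X - Y‖ ≤ (4 * sep / 25) * ‖X - Y‖ := mul_le_mul_of_nonneg_right hgr hdn
    linarith [t1, m1, m2, m3, m4, ht1, ht2, ht3, ht4, ht5, ht6]
  classical
  set sol : Matrix (Fin p) (Fin q) ℝ → Matrix (Fin p) (Fin q) ℝ :=
    fun Y => Classical.choose (solve Y) with hsoldef
  have sol_spec : ∀ Y, L₂ * sol Y - sol Y * L₁ = Y := fun Y => Classical.choose_spec (solve Y)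
  set B : Set (Matrix (Fin p) (Fin q) ℝ) := {X | ‖X‖ ≤ ρ} with hB
  have hBclosed : IsClosed B := isClosed_le continuous_norm continuous_const
  haveI : @CompleteSpace B PseudoMetricSpace.toUniformSpace := hBclosed.completeSpace_coe
  haveI : Nonempty B := ⟨⟨0, by simp only [hB, Set.mem_setOf_eq, norm_zero]; exact hρ0⟩⟩
  have hΦmem : ∀ X : Matrix (Fin p) (Fin q) ℝ, ‖X‖ ≤ ρ → ‖sol (arg X)‖ ≤ ρ := by
    intro X hX
    have h1 := bound (sol (arg X))
    rw [sol_spec] at h1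
    have h2 := harg_bound X hX
    exact (mul_le_mul_iff_right₀ hsep).mp (h1.trans h2)
  set f : B → B := fun x => ⟨sol (arg x.1), hΦmem x.1 x.2⟩ with hf
  have hlip : ∀ x y : B, dist (f x) (f y) ≤ (18/25 : ℝ) * dist x y := by
    intro x y
    rw [Subtype.dist_eq, Subtype.dist_eq, dist_eq_norm, dist_eq_norm]
    show ‖sol (arg x.1) - sol (arg y.1)‖ ≤ (18/25 : ℝ) * ‖x.1 - y.1‖
    have h1 := bound (sol (arg x.1) - sol (arg y.1))
    have h2 : L₂ * (sol (arg x.1) - sol (arg y.1)) - (sol (arg x.1) - sol (arg y.1)) * L₁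
        = arg x.1 - arg y.1 := by
      have e : L₂ * (sol (arg x.1) - sol (arg y.1)) - (sol (arg x.1) - sol (arg y.1)) * L₁
          = (L₂ * sol (arg x.1) - sol (arg x.1) * L₁) - (L₂ * sol (arg y.1) - sol (arg y.1) * L₁) := by
        rw [Matrix.mul_sub, Matrix.sub_mul]
        abel
      rw [e, sol_spec, sol_spec]
    rw [h2] at h1
    have h3 := harg_lip x.1 y.1 x.2 y.2
    have h4 : sep * ‖sol (arg x.1) - sol (arg y.1)‖ ≤ sep * ((18/25 : ℝ) * ‖x.1 - y.1‖) := by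
      linarith [h1.trans h3]
    exact (mul_le_mul_iff_right₀ hsep).mp h4
  have hcw : ContractingWith ((18 : NNReal)/25) f := by
    constructor
    · rw [← NNReal.coe_lt_coe]; push_cast; norm_num
    · apply LipschitzWith.of_dist_le_mul
      intro x y
      calc dist (f x) (f y) ≤ (18/25 : ℝ) * dist x y := hlip x y
        _ = (((18 : NNReal)/25 : NNReal) : ℝ) * dist x y := by push_cast; norm_num
  set x := ContractingWith.fixedPoint f hcw with hx
  have hfix : f x = x := hcw.fixedPoint_isFixedPt
  refine ⟨x.1, x.2, ?_⟩
  have hval : sol (arg x.1) = x.1 := congrArg Subtype.val hfix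
  have := sol_spec (arg x.1)
  rw [hval] at this
  rw [this]

lemma trace_transpose_mul_self_nonneg {k l : ℕ} (X : Matrix (Fin k) (Fin l) ℝ) :
    0 ≤ (Xᵀ * X).trace := by
  rw [Matrix.trace]
  refine Finset.sum_nonneg fun j _ => ?_
  rw [Matrix.diag_apply, Matrix.mul_apply]
  exact Finset.sum_nonneg fun i _ => mul_self_nonneg _

lemma proj_norm_le {n r k : ℕ} (Q₁ : Matrix (Fin n) (Fin r) ℝ)
    (Q₂ : Matrix (Fin n) (Fin (n - r)) ℝ)
    (hQfull : Q₁ * Q₁ᵀ + Q₂ * Q₂ᵀ = 1) (M : Matrix (Fin n) (Fin k) ℝ) :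
    ‖Q₁ᵀ * M‖ ≤ ‖M‖ ∧ ‖Q₂ᵀ * M‖ ≤ ‖M‖ := by
  have key : ((Q₁ᵀ * M)ᵀ * (Q₁ᵀ * M)).trace + ((Q₂ᵀ * M)ᵀ * (Q₂ᵀ * M)).trace
      = (Mᵀ * M).trace := by
    rw [← Matrix.trace_add]
    congr 1
    have e1 : (Q₁ᵀ * M)ᵀ * (Q₁ᵀ * M) = Mᵀ * (Q₁ * Q₁ᵀ) * M := by
      rw [Matrix.transpose_mul, Matrix.transpose_transpose]
      simp only [Matrix.mul_assoc]
    have e2 : (Q₂ᵀ * M)ᵀ * (Q₂ᵀ * M) = Mᵀ * (Q₂ * Q₂ᵀ) * M := by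
      rw [Matrix.transpose_mul, Matrix.transpose_transpose]
      simp only [Matrix.mul_assoc]
    rw [e1, e2, ← Matrix.add_mul, ← Matrix.mul_add, hQfull, Matrix.mul_one]
  have h1 := trace_transpose_mul_self_nonneg (Q₁ᵀ * M)
  have h2 := trace_transpose_mul_self_nonneg (Q₂ᵀ * M)
  constructor
  · rw [← frobNorm_eq, ← frobNorm_eq, frobNorm, frobNorm]
    exact Real.sqrt_le_sqrt (by linarith)
  · rw [← frobNorm_eq, ← frobNorm_eq, frobNorm, frobNorm]
    exact Real.sqrt_le_sqrt (by linarith)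

open scoped Classical in
/-- The inverse of the positive semidefinite square root of a positive semidefinite
matrix (junk value `0` if the matrix is not positive semidefinite). -/
noncomputable def matInvSqrt {r : ℕ} (S : Matrix (Fin r) (Fin r) ℝ) :
    Matrix (Fin r) (Fin r) ℝ :=
  if h : S.PosSemidef then
    (h.1.eigenvectorUnitary.1 * diagonal ((RCLike.ofReal : ℝ → ℝ) ∘ Real.sqrt ∘ h.1.eigenvalues) *
      (star h.1.eigenvectorUnitary : Matrix (Fin r) (Fin r) ℝ))⁻¹ else 0

namespace Matrix.PosSemidef

noncomputable def sqrt {r : ℕ} {S : Matrix (Fin r) (Fin r) ℝ} (h : S.PosSemidef) :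
    Matrix (Fin r) (Fin r) ℝ :=
  h.1.eigenvectorUnitary.1 * diagonal ((RCLike.ofReal : ℝ → ℝ) ∘ Real.sqrt ∘ h.1.eigenvalues) *
    (star h.1.eigenvectorUnitary : Matrix (Fin r) (Fin r) ℝ)

lemma sqrt_transpose {r : ℕ} {S : Matrix (Fin r) (Fin r) ℝ} (h : S.PosSemidef) :
    h.sqrtᵀ = h.sqrt := by
  simp only [sqrt, Matrix.transpose_mul, Matrix.diagonal_transpose, Matrix.mul_assoc,
    Matrix.star_eq_conjTranspose, Matrix.conjTranspose_eq_transpose_of_trivial,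
    Matrix.transpose_transpose]

lemma sqrt_mul_self {r : ℕ} {S : Matrix (Fin r) (Fin r) ℝ} (h : S.PosSemidef) :
    h.sqrt * h.sqrt = S := by
  have hU : (star (h.1.eigenvectorUnitary : Matrix (Fin r) (Fin r) ℝ)) *
      (h.1.eigenvectorUnitary : Matrix (Fin r) (Fin r) ℝ) = 1 :=
    (Matrix.mem_unitaryGroup_iff').mp h.1.eigenvectorUnitary.2
  have hspec := h.1.spectral_theorem
  simp at hspec
  unfold sqrt
  simp only [Matrix.mul_assoc]
  rw [← Matrix.mul_assoc (star _) _ (_ * _), hU, Matrix.one_mul, ← Matrix.mul_assoc (diagonal _),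
    Matrix.diagonal_mul_diagonal]
  conv_rhs => rw [hspec]
  rw [Matrix.mul_assoc]
  congr 3
  funext i
  simp [Real.mul_self_sqrt (h.eigenvalues_nonneg i)]

end Matrix.PosSemidef

/-- Lemma A1: matrix perturbation result for invariant subspaces of symmetric matrices. -/
theorem stmt_2
    (n r : ℕ)
    (A E : Matrix (Fin n) (Fin n) ℝ)
    (hA : A.IsSymm) (hAE : (A + E).IsSymm)
    (Q₁ : Matrix (Fin n) (Fin r) ℝ) (Q₂ : Matrix (Fin n) (Fin (n - r)) ℝ)
    (hQ₁ : Q₁ᵀ * Q₁ = 1) (hQ₂ : Q₂ᵀ * Q₂ = 1) (hQ₁₂ : Q₁ᵀ * Q₂ = 0)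
    (hQfull : Q₁ * Q₁ᵀ + Q₂ * Q₂ᵀ = 1)
    (hinv : Q₂ᵀ * A * Q₁ = 0)
    (sep : ℝ)
    (hsepdef : sep =
      sInf {x : ℝ | ∃ μ ∈ spectrum ℝ (Q₁ᵀ * A * Q₁),
        ∃ ν ∈ spectrum ℝ (Q₂ᵀ * A * Q₂), x = |μ - ν|})
    (hsep : 0 < sep)
    (hE : frobNorm E ≤ sep / 5) :
    ∃ P : Matrix (Fin (n - r)) (Fin r) ℝ,
      frobNorm P ≤ 4 * frobNorm (Q₁ᵀ * E * Q₂) / sep ∧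
      ((Q₁ + Q₂ * P) * matInvSqrt (1 + Pᵀ * P))ᵀ
          * ((Q₁ + Q₂ * P) * matInvSqrt (1 + Pᵀ * P)) = 1 ∧
      ∃ R : Matrix (Fin r) (Fin r) ℝ,
        (A + E) * ((Q₁ + Q₂ * P) * matInvSqrt (1 + Pᵀ * P))
          = ((Q₁ + Q₂ * P) * matInvSqrt (1 + Pᵀ * P)) * R := by
  -- E is symmetric
  have hAsymm : Aᵀ = A := hA
  have hEsymm : Eᵀ = E := by
    have h1 : (A + E)ᵀ = A + E := hAE
    rw [Matrix.transpose_add, hAsymm] at h1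
    exact add_left_cancel h1
  have hQ₂₁ : Q₂ᵀ * Q₁ = 0 := by
    have := congrArg Matrix.transpose hQ₁₂
    simpa [Matrix.transpose_mul] using this
  set L₁ := Q₁ᵀ * A * Q₁ with hL₁def
  set L₂ := Q₂ᵀ * A * Q₂ with hL₂def
  have h₁ : L₁.IsHermitian := by
    show L₁ᵀ = L₁
    rw [hL₁def, Matrix.transpose_mul, Matrix.transpose_mul, Matrix.transpose_transpose,
      hAsymm, Matrix.mul_assoc]
  have h₂ : L₂.IsHermitian := by
    show L₂ᵀ = L₂
    rw [hL₂def, Matrix.transpose_mul, Matrix.transpose_mul, Matrix.transpose_transpose,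
      hAsymm, Matrix.mul_assoc]
  have hgap : ∀ μ ∈ spectrum ℝ L₁, ∀ ν ∈ spectrum ℝ L₂, sep ≤ |μ - ν| := by
    intro μ hμ ν hν
    rw [hsepdef]
    apply csInf_le
    · exact ⟨0, fun x ⟨a, _, b, _, hx⟩ => hx ▸ abs_nonneg _⟩
    · exact ⟨μ, hμ, ν, hν, rfl⟩
  -- perturbation blocks
  set F₁₁ := Q₁ᵀ * E * Q₁ with hF₁₁
  set F₂₂ := Q₂ᵀ * E * Q₂ with hF₂₂
  set F₁₂ := Q₁ᵀ * E * Q₂ with hF₁₂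
  set F₂₁ := Q₂ᵀ * E * Q₁ with hF₂₁
  have hEn : ‖E‖ ≤ sep / 5 := by rw [← frobNorm_eq]; exact hE
  have hbound : ∀ {k l : ℕ} (Qa : Matrix (Fin n) (Fin k) ℝ) (Qb : Matrix (Fin n) (Fin l) ℝ),
      (∀ (j : ℕ) (M : Matrix (Fin n) (Fin j) ℝ), ‖Qaᵀ * M‖ ≤ ‖M‖) →
      (∀ (j : ℕ) (M : Matrix (Fin n) (Fin j) ℝ), ‖Qbᵀ * M‖ ≤ ‖M‖) →
      ‖Qaᵀ * E * Qb‖ ≤ ‖E‖ := by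
    intro k l Qa Qb ha hb
    calc ‖Qaᵀ * E * Qb‖ = ‖(Qaᵀ * E * Qb)ᵀ‖ := (Matrix.frobenius_norm_transpose _).symm
      _ = ‖Qbᵀ * (Qaᵀ * E)ᵀ‖ := by rw [Matrix.transpose_mul]
      _ ≤ ‖(Qaᵀ * E)ᵀ‖ := hb _ _
      _ = ‖Qaᵀ * E‖ := Matrix.frobenius_norm_transpose _
      _ ≤ ‖E‖ := ha _ _
  have hproj1 : ∀ {k : ℕ} (M : Matrix (Fin n) (Fin k) ℝ), ‖Q₁ᵀ * M‖ ≤ ‖M‖ :=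
    fun M => (proj_norm_le Q₁ Q₂ hQfull M).1
  have hproj2 : ∀ {k : ℕ} (M : Matrix (Fin n) (Fin k) ℝ), ‖Q₂ᵀ * M‖ ≤ ‖M‖ :=
    fun M => (proj_norm_le Q₁ Q₂ hQfull M).2
  have h11 : ‖F₁₁‖ ≤ sep / 5 := le_trans (hbound Q₁ Q₁ (fun _ M => hproj1 M) (fun _ M => hproj1 M)) hEn
  have h22 : ‖F₂₂‖ ≤ sep / 5 := le_trans (hbound Q₂ Q₂ (fun _ M => hproj2 M) (fun _ M => hproj2 M)) hEn
  have h21 : ‖F₂₁‖ ≤ sep / 5 := le_trans (hbound Q₂ Q₁ (fun _ M => hproj2 M) (fun _ M => hproj1 M)) hEn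
  have heq : ‖F₁₂‖ = ‖F₂₁‖ := by
    rw [← Matrix.frobenius_norm_transpose F₁₂]
    congr 1
    rw [hF₁₂, hF₂₁, Matrix.transpose_mul, Matrix.transpose_mul, Matrix.transpose_transpose,
      hEsymm, Matrix.mul_assoc]
  obtain ⟨P, hPn, hPeq⟩ := riccati_solve L₁ L₂ h₁ h₂ sep hsep hgap F₁₁ F₂₂ F₁₂ F₂₁ h11 h22 h21 heq
  -- block identities for A + E
  have hB21 : Q₂ᵀ * (A + E) * Q₁ = F₂₁ := by
    rw [Matrix.mul_add, Matrix.add_mul, hinv, hF₂₁, zero_add]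
  have hB12 : Q₁ᵀ * (A + E) * Q₂ = F₁₂ := by
    have hA12 : Q₁ᵀ * A * Q₂ = 0 := by
      have := congrArg Matrix.transpose hinv
      simpa [Matrix.transpose_mul, Matrix.transpose_transpose, hAsymm, Matrix.mul_assoc] using this
    rw [Matrix.mul_add, Matrix.add_mul, hA12, hF₁₂, zero_add]
  have hB11 : Q₁ᵀ * (A + E) * Q₁ = L₁ + F₁₁ := by
    rw [Matrix.mul_add, Matrix.add_mul]
  have hB22 : Q₂ᵀ * (A + E) * Q₂ = L₂ + F₂₂ := by
    rw [Matrix.mul_add, Matrix.add_mul]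
  set R' := Q₁ᵀ * (A + E) * Q₁ + Q₁ᵀ * (A + E) * Q₂ * P with hR'
  -- Riccati in block form
  have hRic : Q₂ᵀ * (A + E) * Q₁ + Q₂ᵀ * (A + E) * Q₂ * P = P * R' := by
    rw [hR', hB21, hB12, hB11, hB22]
    have expand : P * (L₁ + F₁₁ + F₁₂ * P) = P * L₁ + P * F₁₁ + P * F₁₂ * P := by
      rw [Matrix.mul_add, Matrix.mul_add, ← Matrix.mul_assoc P F₁₂ P]
    rw [expand]
    have := hPeq
    rw [Matrix.add_mul]
    -- goal: F₂₁ + (L₂ * P + F₂₂ * P) = P * L₁ + P * F₁₁ + P * F₁₂ * P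
    have h' : L₂ * P = P * L₁ + (-F₂₁ - F₂₂ * P + P * F₁₁ + P * F₁₂ * P) := by
      rw [← this]; abel
    rw [h']
    abel
  -- invariance
  have hinv2 : (A + E) * (Q₁ + Q₂ * P) = (Q₁ + Q₂ * P) * R' := by
    have step1 : (A + E) * (Q₁ + Q₂ * P)
        = (Q₁ * Q₁ᵀ + Q₂ * Q₂ᵀ) * ((A + E) * (Q₁ + Q₂ * P)) := by
      rw [hQfull, Matrix.one_mul]
    rw [step1]
    have step2 : (Q₁ * Q₁ᵀ + Q₂ * Q₂ᵀ) * ((A + E) * (Q₁ + Q₂ * P))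
        = Q₁ * (Q₁ᵀ * (A + E) * Q₁ + Q₁ᵀ * (A + E) * Q₂ * P)
          + Q₂ * (Q₂ᵀ * (A + E) * Q₁ + Q₂ᵀ * (A + E) * Q₂ * P) := by
      simp only [Matrix.add_mul, Matrix.mul_add, Matrix.mul_assoc]
      abel
    rw [step2, hRic, ← hR', Matrix.add_mul, Matrix.mul_assoc]
  -- positive definiteness
  have hPtP : (Pᵀ * P).PosSemidef := Matrix.posSemidef_conjTranspose_mul_self P
  have hSpd : (1 + Pᵀ * P).PosDef := Matrix.PosDef.add_posSemidef Matrix.PosDef.one hPtP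
  have hS : (1 + Pᵀ * P).PosSemidef := hSpd.posSemidef
  have hW : matInvSqrt (1 + Pᵀ * P) = hS.sqrt⁻¹ := dif_pos hS
  have hsq : hS.sqrt * hS.sqrt = 1 + Pᵀ * P := hS.sqrt_mul_self
  have hdet : IsUnit hS.sqrt.det := by
    have hd : hS.sqrt.det * hS.sqrt.det = (1 + Pᵀ * P).det := by
      rw [← Matrix.det_mul, hsq]
    have hpos : 0 < (1 + Pᵀ * P).det := hSpd.det_pos
    apply isUnit_iff_ne_zero.mpr
    intro h0
    rw [h0, mul_zero] at hd
    rw [← hd] at hpos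
    exact lt_irrefl 0 hpos
  have hWl : hS.sqrt⁻¹ * hS.sqrt = 1 := Matrix.nonsing_inv_mul _ hdet
  have hWr : hS.sqrt * hS.sqrt⁻¹ = 1 := Matrix.mul_nonsing_inv _ hdet
  have hsqT : hS.sqrt ᵀ = hS.sqrt := hS.sqrt_transpose
  have hWt : (hS.sqrt⁻¹)ᵀ = hS.sqrt⁻¹ := by
    rw [Matrix.transpose_nonsing_inv, hsqT]
  have hinner : (Q₁ + Q₂ * P)ᵀ * (Q₁ + Q₂ * P) = 1 + Pᵀ * P := by
    rw [Matrix.transpose_add, Matrix.transpose_mul, Matrix.add_mul, Matrix.mul_add,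
      Matrix.mul_add, hQ₁]
    rw [Matrix.mul_assoc Pᵀ Q₂ᵀ Q₁, hQ₂₁, Matrix.mul_zero]
    rw [show Q₁ᵀ * (Q₂ * P) = (Q₁ᵀ * Q₂) * P from (Matrix.mul_assoc _ _ _).symm, hQ₁₂,
      Matrix.zero_mul]
    rw [show Pᵀ * Q₂ᵀ * (Q₂ * P) = Pᵀ * (Q₂ᵀ * Q₂) * P by simp only [Matrix.mul_assoc], hQ₂,
      Matrix.mul_one]
    abel
  refine ⟨P, ?_, ?_, ?_⟩
  · rw [frobNorm_eq, frobNorm_eq]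
    show ‖P‖ ≤ 4 * ‖F₁₂‖ / sep
    rw [heq]
    exact hPn
  · rw [hW, Matrix.transpose_mul, hWt]
    calc hS.sqrt⁻¹ * (Q₁ + Q₂ * P)ᵀ * ((Q₁ + Q₂ * P) * hS.sqrt⁻¹)
        = hS.sqrt⁻¹ * ((Q₁ + Q₂ * P)ᵀ * (Q₁ + Q₂ * P)) * hS.sqrt⁻¹ := by
          simp only [Matrix.mul_assoc]
      _ = hS.sqrt⁻¹ * (hS.sqrt * hS.sqrt) * hS.sqrt⁻¹ := by rw [hinner, hsq]
      _ = 1 := by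
          rw [show hS.sqrt⁻¹ * (hS.sqrt * hS.sqrt) = hS.sqrt⁻¹ * hS.sqrt * hS.sqrt by
            simp only [Matrix.mul_assoc], hWl, Matrix.one_mul, hWr]
  · refine ⟨hS.sqrt * R' * hS.sqrt⁻¹, ?_⟩
    rw [hW]
    calc (A + E) * ((Q₁ + Q₂ * P) * hS.sqrt⁻¹)
        = ((A + E) * (Q₁ + Q₂ * P)) * hS.sqrt⁻¹ := by simp only [Matrix.mul_assoc]
      _ = (Q₁ + Q₂ * P) * R' * hS.sqrt⁻¹ := by rw [hinv2]
      _ = (Q₁ + Q₂ * P) * hS.sqrt⁻¹ * (hS.sqrt * R' * hS.sqrt⁻¹) := by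
          simp only [Matrix.mul_assoc]
          rw [show hS.sqrt⁻¹ * (hS.sqrt * (R' * hS.sqrt⁻¹)) = (hS.sqrt⁻¹ * hS.sqrt) * (R' * hS.sqrt⁻¹) by
            simp only [Matrix.mul_assoc], hWl, Matrix.one_mul]
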